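/- Let F = f + h with f μ-strongly convex and L-smooth and h convex, α = √(μ/L), β = 1/(1+α), y_k = βx_k + (1−β)v_k, x_{k+1} = y_k − (1/L)G_L(y_k), and φ*_{k+1} = (1−α)(φ*_k + α(μ/2)‖v_k − y_k^{++}‖²) + α(F(x_{k+1}) + (1/(2L) − 1/(2μ))‖G_L(y_k)‖²), where y_k^{++} = y_k − (1/μ)G_L(y_k). Then F(x_{k+1}) − φ*_{k+1} ≤ (1 − √(μ/L))(F(x_k) − φ*_k). -/
import Mathlib


open scoped InnerProductSpace

/-- Scalar core of the contraction estimate. -/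
lemma acuesa_aux (α L P Q s D Gn φk μ β : ℝ) (hL : 0 < L) (hα0 : 0 < α) (hα1 : α ≤ 1)
    (hD : 0 ≤ D) (hμ2 : μ = α ^ 2 * L) (hβ : β = 1 / (1 + α))
    (key : P + (1 - β) * s + μ / 2 * ((1 - β) ^ 2 * D) + 1 / (2 * L) * Gn ≤ Q) :
    P - ((1 - α) * (φk + α * (μ / 2) * ((1 / μ) ^ 2 * Gn - 2 * ((1 / μ) * β) * s + β ^ 2 * D))
        + α * (P + (1 / (2 * L) - 1 / (2 * μ)) * Gn))
      ≤ (1 - α) * (Q - φk) := by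
  subst hμ2 hβ
  have h1α : 0 < 1 + α := by linarith
  have key' := mul_le_mul_of_nonneg_left key (show (0:ℝ) ≤ 1 - α by linarith)
  have hDpos : 0 ≤ (1 - α) * (α ^ 2 * L / 2) * α * (1 + α) * (1 / (1 + α)) ^ 2 * D := by
    have : (0:ℝ) ≤ 1 - α := by linarith
    positivity
  have hE : P - ((1 - α) * (φk + α * (α ^ 2 * L / 2) *
        ((1 / (α ^ 2 * L)) ^ 2 * Gn - 2 * ((1 / (α ^ 2 * L)) * (1 / (1 + α))) * s
          + (1 / (1 + α)) ^ 2 * D))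
        + α * (P + (1 / (2 * L) - 1 / (2 * (α ^ 2 * L))) * Gn))
      - (1 - α) * (Q - φk)
      = (1 - α) * ((P + (1 - 1 / (1 + α)) * s
          + α ^ 2 * L / 2 * ((1 - 1 / (1 + α)) ^ 2 * D) + 1 / (2 * L) * Gn) - Q)
        - (1 - α) * (α ^ 2 * L / 2) * α * (1 + α) * (1 / (1 + α)) ^ 2 * D := by
    field_simp
    ring
  nlinarith [key', hDpos, hE]

/-- per-iteration contraction of ACUESA with α = √(μ/L), β = 1/(1+α). -/
theorem acuesa_contraction {n : ℕ}
    (F : EuclideanSpace ℝ (Fin n) → ℝ)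
    (G : EuclideanSpace ℝ (Fin n) → EuclideanSpace ℝ (Fin n))  -- proximal gradient
    (μ L : ℝ) (hμ : 0 < μ) (hμL : μ ≤ L)
    (hlb : ∀ u y, F (y - (1 / L) • G y) + ⟪G y, u - y⟫_ℝ + μ / 2 * ‖u - y‖ ^ 2
                + 1 / (2 * L) * ‖G y‖ ^ 2 ≤ F u)
    (xk vk : EuclideanSpace ℝ (Fin n)) (φk : ℝ)
    (α β : ℝ) (hαdef : α = Real.sqrt (μ / L)) (hβdef : β = 1 / (1 + α))
    (yk : EuclideanSpace ℝ (Fin n)) (hyk : yk = β • xk + (1 - β) • vk) :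
    F (yk - (1 / L) • G yk)
      - ((1 - α) * (φk + α * (μ / 2) * ‖vk - (yk - (1 / μ) • G yk)‖ ^ 2)
          + α * (F (yk - (1 / L) • G yk)
              + (1 / (2 * L) - 1 / (2 * μ)) * ‖G yk‖ ^ 2))
    ≤ (1 - Real.sqrt (μ / L)) * (F xk - φk) := by
  have hL : 0 < L := lt_of_lt_of_le hμ hμL
  have hr : 0 < μ / L := by positivity
  have hα0 : 0 < α := by rw [hαdef]; exact Real.sqrt_pos.mpr hr
  have hα2 : α ^ 2 = μ / L := by rw [hαdef, sq, Real.mul_self_sqrt hr.le]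
  have hα1 : α ≤ 1 := by
    nlinarith [hα2, (div_le_one hL).mpr hμL]
  have hμ2 : μ = α ^ 2 * L := by rw [hα2]; field_simp
  have hβ0 : 0 ≤ β := by rw [hβdef]; positivity
  -- vector identities
  have h1 : xk - yk = (1 - β) • (xk - vk) := by rw [hyk]; module
  have h2 : vk - (yk - (1 / μ) • G yk) = (1 / μ) • G yk - β • (xk - vk) := by
    rw [hyk]; module
  have hn1 : ‖xk - yk‖ ^ 2 = (1 - β) ^ 2 * ‖xk - vk‖ ^ 2 := by
    rw [h1, norm_smul, mul_pow, Real.norm_eq_abs, sq_abs]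
  have hi1 : ⟪G yk, xk - yk⟫_ℝ = (1 - β) * ⟪G yk, xk - vk⟫_ℝ := by
    rw [h1, real_inner_smul_right]
  have hn2 : ‖vk - (yk - (1 / μ) • G yk)‖ ^ 2
      = (1 / μ) ^ 2 * ‖G yk‖ ^ 2 - 2 * ((1 / μ) * β) * ⟪G yk, xk - vk⟫_ℝ
        + β ^ 2 * ‖xk - vk‖ ^ 2 := by
    rw [h2, @norm_sub_sq_real, norm_smul, norm_smul, real_inner_smul_left,
      real_inner_smul_right, Real.norm_eq_abs, Real.norm_eq_abs,
      abs_of_nonneg (by positivity : (0:ℝ) ≤ 1 / μ), abs_of_nonneg hβ0]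
    ring
  have key0 := hlb xk yk
  rw [hi1, hn1] at key0
  have key : F (yk - (1 / L) • G yk) + (1 - β) * ⟪G yk, xk - vk⟫_ℝ
      + μ / 2 * ((1 - β) ^ 2 * ‖xk - vk‖ ^ 2) + 1 / (2 * L) * ‖G yk‖ ^ 2 ≤ F xk := by
    nlinarith [key0]
  have main := acuesa_aux α L (F (yk - (1 / L) • G yk)) (F xk)
    (⟪G yk, xk - vk⟫_ℝ) (‖xk - vk‖ ^ 2) (‖G yk‖ ^ 2) φk μ β hL hα0 hα1
    (sq_nonneg _) hμ2 hβdef key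
  rw [hn2, ← hαdef]
  linarith [main]
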